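/- Consider a bucket with fields (ID, YES, NO) maintained by the weighted majority-vote insertion rule (matching key increments YES by v; non-matching key increments NO by v, followed by a swap of YES and NO and replacement of ID if NO ≥ YES). Then at all times, for every key e₀ different from the stored ID, the true inserted total f(e₀) satisfies 0 ≤ f(e₀) ≤ NO. -/

import Mathlib

/-- State of an error-sensible bucket: candidate key (if any), YES counter, NO counter. -/
structure Bucket (K : Type) where
  id : Option K
  yes : ℝ
  no : ℝ

/-- Weighted majority-vote insertion of one key-value pair. -/
noncomputable def Bucket.insert {K : Type} [DecidableEq K] (b : Bucket K) (p : K × ℝ) : Bucket K :=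
  if some p.1 = b.id then
    { b with yes := b.yes + p.2 }
  else
    let no' := b.no + p.2
    if b.yes ≤ no' then ⟨some p.1, no', b.yes⟩ else { b with no := no' }

/-- The empty bucket. -/
def Bucket.init (K : Type) : Bucket K := ⟨none, 0, 0⟩

/-- Final bucket state after inserting a stream of key-value pairs. -/
noncomputable def Bucket.run {K : Type} [DecidableEq K] (L : List (K × ℝ)) : Bucket K :=
  L.foldl Bucket.insert (Bucket.init K)

/-- The true total value inserted with key `e₀` in the stream `L`. -/
def streamCount {K : Type} [DecidableEq K] (L : List (K × ℝ)) (e₀ : K) : ℝ :=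
  (L.map (fun p => if p.1 = e₀ then p.2 else 0)).sum

lemma bucket_aux {K : Type} [DecidableEq K] (L : List (K × ℝ))
    (hv : ∀ p ∈ L, 0 ≤ p.2) (b : Bucket K) (f : K → ℝ)
    (h1 : 0 ≤ b.no) (h2 : b.no ≤ b.yes)
    (h4 : ∀ e, some e = b.id → f e ≤ b.yes)
    (h5 : ∀ e, some e ≠ b.id → f e ≤ b.no) :
    0 ≤ (L.foldl Bucket.insert b).no ∧
    (L.foldl Bucket.insert b).no ≤ (L.foldl Bucket.insert b).yes ∧
    (∀ e, some e = (L.foldl Bucket.insert b).id →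
      f e + streamCount L e ≤ (L.foldl Bucket.insert b).yes) ∧
    (∀ e, some e ≠ (L.foldl Bucket.insert b).id →
      f e + streamCount L e ≤ (L.foldl Bucket.insert b).no) := by
  induction L generalizing b f with
  | nil =>
    simp only [List.foldl_nil, streamCount, List.map_nil, List.sum_nil, add_zero]
    exact ⟨h1, h2, h4, h5⟩
  | cons p L ih =>
    have hp : 0 ≤ p.2 := hv p (by simp)
    have hv' : ∀ q ∈ L, 0 ≤ q.2 := fun q hq => hv q (by simp [hq])
    have hsc : ∀ e, streamCount (p :: L) e
        = (if p.1 = e then p.2 else 0) + streamCount L e := by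
      intro e; simp [streamCount]
    simp only [List.foldl_cons]
    set b' := b.insert p with hb'
    have key : 0 ≤ b'.no ∧ b'.no ≤ b'.yes ∧
        (∀ e, some e = b'.id → f e + (if p.1 = e then p.2 else 0) ≤ b'.yes) ∧
        (∀ e, some e ≠ b'.id → f e + (if p.1 = e then p.2 else 0) ≤ b'.no) := by
      rw [hb']
      unfold Bucket.insert
      by_cases hc : some p.1 = b.id
      · rw [if_pos hc]
        dsimp only
        refine ⟨h1, by linarith, ?_, ?_⟩
        · intro e he
          have hfe := h4 e he
          by_cases hpe : p.1 = e
          · rw [if_pos hpe]; linarith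
          · rw [if_neg hpe]; linarith
        · intro e he
          have hpe : p.1 ≠ e := fun h => he (h ▸ hc)
          rw [if_neg hpe, add_zero]
          exact h5 e he
      · rw [if_neg hc]
        by_cases hs : b.yes ≤ b.no + p.2
        · rw [if_pos hs]
          dsimp only
          refine ⟨by linarith, hs, ?_, ?_⟩
          · intro e he
            have hpe : p.1 = e := by injection he.symm
            rw [if_pos hpe]
            have := h5 e (hpe ▸ hc)
            linarith
          · intro e he
            have hpe : p.1 ≠ e := fun h => he (by rw [h])
            rw [if_neg hpe, add_zero]
            by_cases hei : some e = b.id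
            · exact h4 e hei
            · have := h5 e hei; linarith
        · rw [if_neg hs]
          dsimp only
          refine ⟨by linarith, by linarith, ?_, ?_⟩
          · intro e he
            have hpe : p.1 ≠ e := fun h => hc (h ▸ he)
            rw [if_neg hpe, add_zero]
            exact h4 e he
          · intro e he
            by_cases hpe : p.1 = e
            · rw [if_pos hpe]
              have := h5 e (hpe ▸ hc); linarith
            · rw [if_neg hpe, add_zero]
              have := h5 e he; linarith
    obtain ⟨k1, k2, k4, k5⟩ := key
    obtain ⟨m1, m2, m4, m5⟩ :=
      ih hv' b' (fun e => f e + (if p.1 = e then p.2 else 0)) k1 k2 k4 k5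
    refine ⟨m1, m2, ?_, ?_⟩
    · intro e he
      rw [hsc, ← add_assoc]
      exact m4 e he
    · intro e he
      rw [hsc, ← add_assoc]
      exact m5 e he

theorem bucket_noncandidate_bounds {K : Type} [DecidableEq K]
    (L : List (K × ℝ)) (hv : ∀ p ∈ L, 0 ≤ p.2) (e₀ : K)
    (hid : (Bucket.run L).id ≠ some e₀) :
    0 ≤ streamCount L e₀ ∧ streamCount L e₀ ≤ (Bucket.run L).no := by
  constructor
  · unfold streamCount
    apply List.sum_nonneg
    intro x hx
    simp only [List.mem_map] at hx
    obtain ⟨p, hp, rfl⟩ := hx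
    split
    · exact hv p hp
    · exact le_rfl
  · have h := (bucket_aux L hv (Bucket.init K) (fun _ => 0) le_rfl le_rfl
      (by intro e he; simp [Bucket.init] at he) (by intro e _; simp [Bucket.init])).2.2.2 e₀ (fun h => hid h.symm)
    simpa [Bucket.run] using h
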